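/- The properties of constant horospherical distortion and constant horospherical dilation are equivalent for a δ-hyperbolic space Y admitting a bounded parabolic action by a finitely generated group P: Y has constant horospherical distortion if and only if Y has constant horospherical dilation. -/

import Mathlib

open Metric Set

/-- The Gromov product `(y|z)_x`. -/
noncomputable def gromovProd {X : Type*} [MetricSpace X] (x y z : X) : ℝ :=
  (dist x y + dist x z - dist y z) / 2

/-- A unit-speed geodesic from `x` to `y`, defined on `[0, dist x y]`. -/
def IsGeodesicSeg {X : Type*} [MetricSpace X] (f : ℝ → X) (x y : X) : Prop :=
  f 0 = x ∧ f (dist x y) = y ∧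
    ∀ s ∈ Set.Icc (0:ℝ) (dist x y), ∀ t ∈ Set.Icc (0:ℝ) (dist x y),
      dist (f s) (f t) = |s - t|

/-- A geodesic metric space: any two points are joined by a geodesic. -/
def GeodesicSpace (X : Type*) [MetricSpace X] : Prop :=
  ∀ x y : X, ∃ f : ℝ → X, IsGeodesicSeg f x y

/-- A unit-speed geodesic ray, defined on `[0, ∞)`. -/
def IsGeodesicRay {X : Type*} [MetricSpace X] (c : ℝ → X) : Prop :=
  ∀ s ∈ Set.Ici (0:ℝ), ∀ t ∈ Set.Ici (0:ℝ), dist (c s) (c t) = |s - t|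

/-- Two geodesic rays are asymptotic if one stays at bounded distance from the other. -/
def AsympRays {X : Type*} [MetricSpace X] (c c' : ℝ → X) : Prop :=
  ∃ K : ℝ, ∀ t, 0 ≤ t → ∃ s, 0 ≤ s ∧ dist (c t) (c' s) ≤ K

/-- δ-hyperbolicity in the "equiradial" sense: on a geodesic triangle with vertices
`x,y,z`, points on the sides `[x,y]` and `[x,z]` that are equidistant from `x`, at distance
at most the Gromov product `(y|z)_x`, are at distance at most δ. -/
def GromovThin (X : Type*) [MetricSpace X] (δ : ℝ) : Prop :=
  ∀ (x y z : X) (f g : ℝ → X), IsGeodesicSeg f x y → IsGeodesicSeg g x z →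
    ∀ s : ℝ, 0 ≤ s → s ≤ gromovProd x y z → dist (f s) (g s) ≤ δ

/-- δ-thin triangles: each side of a geodesic triangle lies in the closed δ-neighborhood
of the union of the other two sides. -/
def ThinTriangles (X : Type*) [MetricSpace X] (δ : ℝ) : Prop :=
  ∀ (x y z : X) (fxy fyz fxz : ℝ → X),
    IsGeodesicSeg fxy x y → IsGeodesicSeg fyz y z → IsGeodesicSeg fxz x z →
    ∀ p ∈ fxy '' Set.Icc (0:ℝ) (dist x y),
      ∃ q ∈ (fyz '' Set.Icc (0:ℝ) (dist y z)) ∪ (fxz '' Set.Icc (0:ℝ) (dist x z)),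
        dist p q ≤ δ

/-- Word length of `p⁻¹ q` with respect to the (symmetrized) generating set `T`. -/
noncomputable def wordDist {P : Type*} [Group P] (T : Set P) (p q : P) : ℕ :=
  sInf {n : ℕ | ∃ w : List P, (∀ s ∈ w, s ∈ T ∨ s⁻¹ ∈ T) ∧ w.prod = p⁻¹ * q ∧ w.length = n}

/-- A bilipschitz homeomorphism of `[0,∞)`. -/
def BilipHomeo (f : ℝ → ℝ) : Prop :=
  ∃ L : ℝ, 1 ≤ L ∧
    (∀ s t : ℝ, 0 ≤ s → 0 ≤ t → L⁻¹ * |s - t| ≤ |f s - f t| ∧ |f s - f t| ≤ L * |s - t|) ∧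
    (∀ s, 0 ≤ s → 0 ≤ f s) ∧ (∀ u, 0 ≤ u → ∃ s, 0 ≤ s ∧ f s = u)

/-- Constant horospherical distortion: the word metric on `P` is comparable, with a
multiplicative constant `B`, to `exp ∘ g` of the distance between orbit points, for a
bilipschitz homeomorphism `g` of `[0,∞)`. -/
def ConstHoroDistortion {Y P : Type*} [MetricSpace Y] [Group P] [MulAction P Y]
    (T : Set P) (y₀ : Y) : Prop :=
  ∃ g : ℝ → ℝ, BilipHomeo g ∧ ∃ B : ℝ, 1 ≤ B ∧ ∀ p p' : P, p ≠ p' →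
    B⁻¹ * Real.exp (g (dist (p • y₀) (p' • y₀))) ≤ (wordDist T p p' : ℝ) ∧
    (wordDist T p p' : ℝ) ≤ B * Real.exp (g (dist (p • y₀) (p' • y₀)))

/-- Constant horospherical dilation with fellow-traveling constant `D`: for some
bilipschitz homeomorphism `f` of `[0,∞)` and some `A' > 0`,
(a) `d(p c(f t), p' c(f t)) ≤ D` implies `d_T(p,p') ≤ A' eᵗ`, and
(b) for every `A > 0` there is `D'` with `d_T(p,p') ≤ A eᵗ` implying
`d(p c(f t), p' c(f t)) ≤ D'`. -/
def ConstHoroDilation {Y P : Type*} [MetricSpace Y] [Group P] [MulAction P Y]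
    (T : Set P) (c : ℝ → Y) (D : ℝ) : Prop :=
  ∃ f : ℝ → ℝ, BilipHomeo f ∧ ∃ A' : ℝ, 0 < A' ∧
    (∀ (p p' : P) (t : ℝ), 0 ≤ t → p ≠ p' →
      dist (p • c (f t)) (p' • c (f t)) ≤ D → (wordDist T p p' : ℝ) ≤ A' * Real.exp t) ∧
    (∀ A : ℝ, 0 < A → ∃ D' : ℝ, ∀ (p p' : P) (t : ℝ), 0 ≤ t → p ≠ p' →
      (wordDist T p p' : ℝ) ≤ A * Real.exp t → dist (p • c (f t)) (p' • c (f t)) ≤ D')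

lemma ray_seg {Y : Type*} [MetricSpace Y] {c : ℝ → Y} (hc : IsGeodesicRay c) {N : ℝ} (hN : 0 ≤ N) :
    IsGeodesicSeg c (c 0) (c N) := by
  have hd : dist (c 0) (c N) = N := by
    rw [hc 0 (Set.mem_Ici.mpr le_rfl) N (Set.mem_Ici.mpr hN), zero_sub, abs_neg, abs_of_nonneg hN]
  refine ⟨rfl, by rw [hd], ?_⟩
  rw [hd]
  intro s hs t ht
  exact hc s hs.1 t ht.1

lemma seg_rev {Y : Type*} [MetricSpace Y] {f : ℝ → Y} {x y : Y} (h : IsGeodesicSeg f x y) :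
    IsGeodesicSeg (fun u => f (dist x y - u)) y x := by
  obtain ⟨h0, h1, hd⟩ := h
  have hxy : dist y x = dist x y := dist_comm y x
  refine ⟨by simpa using h1, ?_, ?_⟩
  · rw [hxy]; simpa using h0
  · intro s hs t ht
    rw [hxy] at hs ht
    have h2 := hd (dist x y - s) ⟨by linarith [hs.2], by linarith [hs.1]⟩
      (dist x y - t) ⟨by linarith [ht.2], by linarith [ht.1]⟩
    simp only []
    rw [h2, show dist x y - s - (dist x y - t) = t - s by ring, abs_sub_comm]

section Sync

variable {Y : Type*} [MetricSpace Y] {P : Type*} [Group P] [MulAction P Y]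
variable {δ D : ℝ} {c : ℝ → Y} {y₀ : Y}

lemma ray_dist {c : ℝ → Y} (hc : IsGeodesicRay c) {s t : ℝ} (hs : 0 ≤ s) (ht : 0 ≤ t) :
    dist (c s) (c t) = |s - t| :=
  hc s (Set.mem_Ici.mpr hs) t (Set.mem_Ici.mpr ht)

lemma sync1 (hδ : 0 ≤ δ) (hc : IsGeodesicRay c) (hc0 : c 0 = y₀)
    (hgeo : GeodesicSpace Y) (hhyp : GromovThin Y δ)
    (hiso : ∀ (p : P) (a b : Y), dist (p • a) (p • b) = dist a b)
    (hone : ∀ c₁ c₂ : ℝ → Y, IsGeodesicRay c₁ → IsGeodesicRay c₂ → AsympRays c₁ c₂)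
    (hDftc : ∀ (p : P) (t : ℝ), 0 ≤ t →
      (∃ s, 0 ≤ s ∧ dist (c t) (p • c s) ≤ 5 * δ) → dist (c t) (p • c t) ≤ D)
    (q : P) (t : ℝ) (ht : dist y₀ (q • y₀) ≤ t) :
    dist (c t) (q • c t) ≤ D := by
  set R := dist y₀ (q • y₀) with hRdef
  have hR0 : 0 ≤ R := dist_nonneg
  have ht0 : 0 ≤ t := le_trans hR0 ht
  -- the translated ray
  have hc' : IsGeodesicRay (fun s => q • c s) := by
    intro s hs u hu
    simp only [hiso]
    exact hc s hs u hu
  obtain ⟨K₀, hK₀⟩ := hone c (fun s => q • c s) hc hc'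
  set K := max K₀ 0 with hKdef
  have hK : 0 ≤ K := le_max_right _ _
  have hKb : ∀ u : ℝ, 0 ≤ u → ∃ s, 0 ≤ s ∧ dist (c u) (q • c s) ≤ K := by
    intro u hu
    obtain ⟨s, hs0, hs⟩ := hK₀ u hu
    exact ⟨s, hs0, le_trans hs (le_max_left _ _)⟩
  set N := t + R + K with hNdef
  have hN0 : 0 ≤ N := by positivity
  set M := N + R + K + 5 with hMdef
  have hM0 : 0 ≤ M := by positivity
  obtain ⟨s₀, hs₀0, hs₀⟩ := hKb N hN0
  -- basic distances along the ray
  have hray : ∀ a b : ℝ, 0 ≤ a → 0 ≤ b → a ≤ b → dist (c a) (c b) = b - a := by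
    intro a b ha hb hab
    rw [ray_dist hc ha hb, abs_sub_comm, abs_of_nonneg (by linarith)]
  have dy : ∀ a : ℝ, 0 ≤ a → dist y₀ (c a) = a := by
    intro a ha
    rw [← hc0, hray 0 a le_rfl ha ha, sub_zero]
  have dyq : ∀ a : ℝ, 0 ≤ a → dist (q • y₀) (q • c a) = a := by
    intro a ha
    rw [hiso, dy a ha]
  -- s₀ bounds
  have hs₀low : N - R - K ≤ s₀ := by
    have h1 : dist y₀ (c N) ≤ dist y₀ (q • y₀) + dist (q • y₀) (q • c s₀) +
        dist (q • c s₀) (c N) := dist_triangle4 _ _ _ _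
    rw [dy N hN0, dyq s₀ hs₀0] at h1
    have h2 : dist (q • c s₀) (c N) ≤ K := by rw [dist_comm]; exact hs₀
    linarith
  have hs₀high : s₀ ≤ R + N + K := by
    have h1 : dist (q • y₀) (q • c s₀) ≤ dist (q • y₀) y₀ + dist y₀ (c N) +
        dist (c N) (q • c s₀) := dist_triangle4 _ _ _ _
    rw [dyq s₀ hs₀0, dy N hN0, dist_comm (q • y₀) y₀] at h1
    linarith
  have hs₀M : s₀ ≤ M := by rw [hMdef]; linarith
  -- dM bounds
  have hdM1 : M - R ≤ dist y₀ (q • c M) := by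
    have h1 : dist (q • y₀) (q • c M) ≤ dist (q • y₀) y₀ + dist y₀ (q • c M) :=
      dist_triangle _ _ _
    rw [dyq M hM0, dist_comm (q • y₀) y₀] at h1
    linarith
  have hdM2 : dist y₀ (q • c M) ≤ R + M := by
    have h1 : dist y₀ (q • c M) ≤ dist y₀ (q • y₀) + dist (q • y₀) (q • c M) :=
      dist_triangle _ _ _
    rw [dyq M hM0] at h1
    linarith
  -- dist (c N) (q • c M) bound
  have hdNM : dist (c N) (q • c M) ≤ K + (M - s₀) := by
    have h1 : dist (c N) (q • c M) ≤ dist (c N) (q • c s₀) + dist (q • c s₀) (q • c M) :=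
      dist_triangle _ _ _
    have h2 : dist (q • c s₀) (q • c M) = M - s₀ := by
      rw [hiso]; exact hray s₀ M hs₀0 hM0 hs₀M
    rw [h2] at h1
    linarith
  -- geodesic from y₀ to q • c M
  obtain ⟨h, hseg⟩ := hgeo y₀ (q • c M)
  -- first thin-triangle application : apex y₀
  have hsegc : IsGeodesicSeg c y₀ (c N) := by
    have := ray_seg hc hN0
    rwa [hc0] at this
  have hprod1 : t ≤ gromovProd y₀ (c N) (q • c M) := by
    unfold gromovProd
    rw [dy N hN0]
    linarith [hdM1, hdNM, hs₀low]
  have E1 : dist (c t) (h t) ≤ δ := hhyp y₀ (c N) (q • c M) c h hsegc hseg t ht0 hprod1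
  -- second thin-triangle application : apex q • c M
  have hsegq : IsGeodesicSeg (fun s => q • c s) (q • y₀) (q • c M) := by
    have h1 := ray_seg hc' hM0
    have h2 : q • c 0 = q • y₀ := by rw [hc0]
    rwa [h2] at h1
  have hrev1 := seg_rev hseg
  have hrev2 := seg_rev hsegq
  have hMq : dist (q • y₀) (q • c M) = M := dyq M hM0
  set σ := dist y₀ (q • c M) - t with hσdef
  have hσ0 : 0 ≤ σ := by
    rw [hσdef]
    have : t + 5 ≤ M - R := by rw [hMdef, hNdef]; linarith
    linarith
  have hprod2 : σ ≤ gromovProd (q • c M) y₀ (q • y₀) := by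
    unfold gromovProd
    rw [dist_comm (q • c M) y₀, dist_comm (q • c M) (q • y₀), hMq, ← hRdef, hσdef]
    linarith
  have E2 := hhyp (q • c M) y₀ (q • y₀) _ _ hrev1 hrev2 σ hσ0 hprod2
  rw [hMq] at E2
  rw [hσdef, sub_sub_cancel] at E2
  -- conclude
  set s₁ := M - (dist y₀ (q • c M) - t) with hs₁def
  have hs₁0 : 0 ≤ s₁ := by
    rw [hs₁def]
    linarith
  have E3 : dist (c t) (q • c s₁) ≤ 5 * δ := by
    have h1 : dist (c t) (q • c s₁) ≤ dist (c t) (h t) + dist (h t) (q • c s₁) :=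
      dist_triangle _ _ _
    have h2 : dist (h t) (q • c s₁) ≤ δ := by
      rw [hs₁def]; exact E2
    linarith
  exact hDftc q t ht0 ⟨s₁, hs₁0, E3⟩

lemma sync2 (hδ : 0 ≤ δ) (hD : 0 ≤ D) (hc : IsGeodesicRay c) (hc0 : c 0 = y₀)
    (hgeo : GeodesicSpace Y) (hhyp : GromovThin Y δ)
    (hiso : ∀ (p : P) (a b : Y), dist (p • a) (p • b) = dist a b)
    (hone : ∀ c₁ c₂ : ℝ → Y, IsGeodesicRay c₁ → IsGeodesicRay c₂ → AsympRays c₁ c₂)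
    (hDftc : ∀ (p : P) (t : ℝ), 0 ≤ t →
      (∃ s, 0 ≤ s ∧ dist (c t) (p • c s) ≤ 5 * δ) → dist (c t) (p • c t) ≤ D)
    (q : P) (t : ℝ) (ht : dist y₀ (q • y₀) / 2 + D ≤ t) :
    dist (c t) (q • c t) ≤ D := by
  set R := dist y₀ (q • y₀) with hRdef
  have hR0 : 0 ≤ R := dist_nonneg
  have ht0 : 0 ≤ t := by linarith
  set T := R + t + D + 1 with hTdef
  have hT0 : 0 ≤ T := by positivity
  have hTR : R ≤ T := by linarith
  have hL1 := sync1 hδ hc hc0 hgeo hhyp hiso hone hDftc q T hTR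
  have hc' : IsGeodesicRay (fun s => q • c s) := by
    intro s hs u hu
    simp only [hiso]
    exact hc s hs u hu
  have hray : ∀ a b : ℝ, 0 ≤ a → 0 ≤ b → a ≤ b → dist (c a) (c b) = b - a := by
    intro a b ha hb hab
    rw [hc a (Set.mem_Ici.mpr ha) b (Set.mem_Ici.mpr hb), abs_sub_comm,
      abs_of_nonneg (by linarith)]
  have dy : ∀ a : ℝ, 0 ≤ a → dist y₀ (c a) = a := by
    intro a ha
    rw [← hc0, hray 0 a le_rfl ha ha, sub_zero]
  have dyq : ∀ a : ℝ, 0 ≤ a → dist (q • y₀) (q • c a) = a := by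
    intro a ha
    rw [hiso, dy a ha]
  have hMq : dist (q • y₀) (q • c T) = T := dyq T hT0
  -- dM bounds
  have hdM1 : T - D ≤ dist y₀ (q • c T) := by
    have h1 : dist y₀ (c T) ≤ dist y₀ (q • c T) + dist (q • c T) (c T) := dist_triangle _ _ _
    rw [dy T hT0, dist_comm (q • c T) (c T)] at h1
    linarith
  have hdM2 : dist y₀ (q • c T) ≤ T + D := by
    have h1 : dist y₀ (q • c T) ≤ dist y₀ (c T) + dist (c T) (q • c T) := dist_triangle _ _ _
    rw [dy T hT0] at h1
    linarith
  -- dist (c T) (q • c T) ≤ D (hL1)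
  obtain ⟨h, hseg⟩ := hgeo y₀ (q • c T)
  have hsegc : IsGeodesicSeg c y₀ (c T) := by
    have := ray_seg hc hT0
    rwa [hc0] at this
  have hprod1 : t ≤ gromovProd y₀ (c T) (q • c T) := by
    unfold gromovProd
    rw [dy T hT0]
    linarith [hdM1, hL1]
  have E1 : dist (c t) (h t) ≤ δ := hhyp y₀ (c T) (q • c T) c h hsegc hseg t ht0 hprod1
  have hsegq : IsGeodesicSeg (fun s => q • c s) (q • y₀) (q • c T) := by
    have h1 := ray_seg hc' hT0
    have h2 : q • c 0 = q • y₀ := by rw [hc0]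
    rwa [h2] at h1
  have hrev1 := seg_rev hseg
  have hrev2 := seg_rev hsegq
  set σ := dist y₀ (q • c T) - t with hσdef
  have hσ0 : 0 ≤ σ := by
    rw [hσdef]
    have : t + 1 ≤ T - D := by rw [hTdef]; linarith
    linarith
  have hprod2 : σ ≤ gromovProd (q • c T) y₀ (q • y₀) := by
    unfold gromovProd
    rw [dist_comm (q • c T) y₀, dist_comm (q • c T) (q • y₀), hMq, ← hRdef, hσdef]
    linarith
  have E2 := hhyp (q • c T) y₀ (q • y₀) _ _ hrev1 hrev2 σ hσ0 hprod2
  rw [hMq] at E2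
  rw [hσdef, sub_sub_cancel] at E2
  set s₁ := T - (dist y₀ (q • c T) - t) with hs₁def
  have hs₁0 : 0 ≤ s₁ := by
    rw [hs₁def]
    linarith
  have E3 : dist (c t) (q • c s₁) ≤ 5 * δ := by
    have h1 : dist (c t) (q • c s₁) ≤ dist (c t) (h t) + dist (h t) (q • c s₁) :=
      dist_triangle _ _ _
    have h2 : dist (h t) (q • c s₁) ≤ δ := by
      rw [hs₁def]; exact E2
    linarith
  exact hDftc q t ht0 ⟨s₁, hs₁0, E3⟩

end Sync

section Aux

lemma one_le_wordDist {P : Type*} [Group P] {T : Set P} (hTgen : Subgroup.closure T = ⊤)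
    {p p' : P} (h : p ≠ p') : 1 ≤ wordDist T p p' := by
  have hmem : p⁻¹ * p' ∈ (Subgroup.closure T).toSubmonoid := by
    rw [hTgen]; trivial
  rw [Subgroup.closure_toSubmonoid] at hmem
  obtain ⟨l, hl, hlp⟩ := Submonoid.exists_list_of_mem_closure hmem
  have hne : {n : ℕ | ∃ w : List P, (∀ s ∈ w, s ∈ T ∨ s⁻¹ ∈ T) ∧ w.prod = p⁻¹ * p' ∧
      w.length = n}.Nonempty := by
    refine ⟨l.length, l, ?_, hlp, rfl⟩
    intro s hs
    rcases hl s hs with h1 | h1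
    · exact Or.inl h1
    · exact Or.inr (by simpa using h1)
  have hmemInf := Nat.sInf_mem hne
  rw [Nat.one_le_iff_ne_zero]
  intro h0
  rw [wordDist] at h0
  rw [h0] at hmemInf
  obtain ⟨w, _, hwp, hwl⟩ := hmemInf
  rw [List.length_eq_zero_iff] at hwl
  subst hwl
  simp only [List.prod_nil] at hwp
  exact h (by rw [eq_comm, inv_mul_eq_one] at hwp; exact hwp)

lemma bilip_strictMonoOn {f : ℝ → ℝ} (hf : BilipHomeo f) : StrictMonoOn f (Set.Ici 0) := by
  obtain ⟨L, hL, hbi, hpos, hsurj⟩ := hf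
  have hL0 : (0:ℝ) < L := lt_of_lt_of_le one_pos hL
  have hinj : ∀ a b : ℝ, 0 ≤ a → 0 ≤ b → f a = f b → a = b := by
    intro a b ha hb hab
    by_contra hne
    have h1 := (hbi a b ha hb).1
    rw [hab, sub_self, abs_zero] at h1
    have h2 : 0 < |a - b| := abs_pos.mpr (sub_ne_zero.mpr hne)
    nlinarith [inv_pos.mpr hL0]
  have hcont : ∀ b : ℝ, ContinuousOn f (Set.Icc 0 b) := by
    intro b
    apply LipschitzOnWith.continuousOn (K := Real.toNNReal L)
    rw [lipschitzOnWith_iff_dist_le_mul]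
    intro x hx y hy
    rw [Real.dist_eq, Real.dist_eq]
    calc |f x - f y| ≤ L * |x - y| := (hbi x y hx.1 hy.1).2
      _ = (Real.toNNReal L : ℝ) * |x - y| := by rw [Real.coe_toNNReal L hL0.le]
  intro x hx y hy hxy
  simp only [Set.mem_Ici] at hx hy
  obtain ⟨u, hu0, huf⟩ := hsurj (f 0 + 1) (by linarith [hpos 0 le_rfl])
  have hu_pos : 0 < u := by
    rcases hu0.lt_or_eq with h' | h'
    · exact h'
    · exfalso; rw [← h'] at huf; linarith
  set b := max y u with hb
  have hb0 : (0:ℝ) ≤ b := le_trans hu_pos.le (le_max_right y u)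
  have hinjOn : Set.InjOn f (Set.Icc 0 b) := fun a ha a' ha' => hinj a a' ha.1 ha'.1
  rcases ContinuousOn.strictMonoOn_of_injOn_Icc' hb0 (hcont b) hinjOn with hm | ha
  · exact hm ⟨hx, le_trans hxy.le (le_max_left y u)⟩ ⟨hy, le_max_left y u⟩ hxy
  · exfalso
    have := ha ⟨le_rfl, hb0⟩ ⟨hu0, le_max_right y u⟩ hu_pos
    rw [huf] at this; linarith

lemma bilip_pack {f : ℝ → ℝ} (hf : BilipHomeo f) :
    ∃ (L : ℝ) (fi : ℝ → ℝ), 1 ≤ L ∧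
      (∀ s t : ℝ, 0 ≤ s → 0 ≤ t → L⁻¹ * |s - t| ≤ |f s - f t| ∧ |f s - f t| ≤ L * |s - t|) ∧
      (∀ s, 0 ≤ s → 0 ≤ f s) ∧
      (∀ u, 0 ≤ u → 0 ≤ fi u ∧ f (fi u) = u) ∧
      (∀ s, 0 ≤ s → fi (f s) = s) ∧
      MonotoneOn f (Set.Ici 0) ∧ MonotoneOn fi (Set.Ici 0) ∧
      (∀ u v : ℝ, 0 ≤ u → 0 ≤ v → |fi u - fi v| ≤ L * |u - v|) ∧
      BilipHomeo fi := by
  have hmono := bilip_strictMonoOn hf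
  obtain ⟨L, hL, hbi, hpos, hsurj⟩ := hf
  have hL0 : (0:ℝ) < L := lt_of_lt_of_le one_pos hL
  classical
  set fi : ℝ → ℝ := fun u => if h : 0 ≤ u then (hsurj u h).choose else 0 with hfidef
  have hfi : ∀ u : ℝ, 0 ≤ u → 0 ≤ fi u ∧ f (fi u) = u := by
    intro u hu
    simp only [hfidef, dif_pos hu]
    exact ⟨(hsurj u hu).choose_spec.1, (hsurj u hu).choose_spec.2⟩
  have hinj : ∀ a b : ℝ, 0 ≤ a → 0 ≤ b → f a = f b → a = b := by
    intro a b ha hb hab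
    by_contra hne
    have h1 := (hbi a b ha hb).1
    rw [hab, sub_self, abs_zero] at h1
    have h2 : 0 < |a - b| := abs_pos.mpr (sub_ne_zero.mpr hne)
    nlinarith [inv_pos.mpr hL0]
  have hfif : ∀ s : ℝ, 0 ≤ s → fi (f s) = s := by
    intro s hs
    have hfs := hpos s hs
    exact hinj _ _ (hfi _ hfs).1 hs (by rw [(hfi _ hfs).2])
  have hfimono : MonotoneOn fi (Set.Ici 0) := by
    intro u hu v hv huv
    by_contra hlt
    push_neg at hlt
    have := hmono (Set.mem_Ici.mpr (hfi v hv).1) (Set.mem_Ici.mpr (hfi u hu).1) hlt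
    rw [(hfi u hu).2, (hfi v hv).2] at this
    exact absurd huv (not_le.mpr this)
  have hfilip : ∀ u v : ℝ, 0 ≤ u → 0 ≤ v → |fi u - fi v| ≤ L * |u - v| := by
    intro u v hu hv
    have h1 := (hbi (fi u) (fi v) (hfi u hu).1 (hfi v hv).1).1
    rw [(hfi u hu).2, (hfi v hv).2] at h1
    calc |fi u - fi v| = L * (L⁻¹ * |fi u - fi v|) := by field_simp
      _ ≤ L * |u - v| := by nlinarith
  refine ⟨L, fi, hL, hbi, hpos, hfi, hfif, hmono.monotoneOn, hfimono, hfilip, ?_⟩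
  refine ⟨L, hL, ?_, fun u hu => (hfi u hu).1, fun u hu => ⟨f u, hpos u hu, hfif u hu⟩⟩
  intro s t hs ht
  constructor
  · have h2 := (hbi (fi s) (fi t) (hfi s hs).1 (hfi t ht).1).2
    rw [(hfi s hs).2, (hfi t ht).2] at h2
    calc L⁻¹ * |s - t| ≤ L⁻¹ * (L * |fi s - fi t|) := by
          apply mul_le_mul_of_nonneg_left h2 (inv_pos.mpr hL0).le
      _ = |fi s - fi t| := by field_simp
  · exact hfilip s t hs ht

lemma bilip_half_comp {f : ℝ → ℝ} (hf : BilipHomeo f) : BilipHomeo (fun t => f t / 2) := by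
  obtain ⟨L, hL, hbi, hpos, hsurj⟩ := hf
  have hL0 : (0:ℝ) < L := lt_of_lt_of_le one_pos hL
  refine ⟨2 * L, by linarith, ?_, fun s hs => div_nonneg (hpos s hs) (by norm_num), ?_⟩
  · intro s t hs ht
    obtain ⟨h1, h2⟩ := hbi s t hs ht
    have he : |f s / 2 - f t / 2| = |f s - f t| / 2 := by
      rw [show f s / 2 - f t / 2 = (f s - f t) / 2 by ring, abs_div, abs_two]
    constructor
    · rw [he]
      have : (2 * L)⁻¹ * |s - t| = (L⁻¹ * |s - t|) / 2 := by
        rw [mul_inv]; ring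
      rw [this]; linarith
    · rw [he]
      nlinarith [abs_nonneg (s - t)]
  · intro u hu
    obtain ⟨s, hs, hfs⟩ := hsurj (2 * u) (by linarith)
    exact ⟨s, hs, by show f s / 2 = u; rw [hfs]; ring⟩

lemma bilip_comp_half {f : ℝ → ℝ} (hf : BilipHomeo f) : BilipHomeo (fun t => f (t / 2)) := by
  obtain ⟨L, hL, hbi, hpos, hsurj⟩ := hf
  have hL0 : (0:ℝ) < L := lt_of_lt_of_le one_pos hL
  refine ⟨2 * L, by linarith, ?_, fun s hs => hpos _ (by linarith), ?_⟩
  · intro s t hs ht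
    obtain ⟨h1, h2⟩ := hbi (s / 2) (t / 2) (by linarith) (by linarith)
    have he : |s / 2 - t / 2| = |s - t| / 2 := by rw [show s / 2 - t / 2 = (s - t) / 2 by ring, abs_div, abs_two]
    rw [he] at h1 h2
    constructor
    · have : (2 * L)⁻¹ * |s - t| = L⁻¹ * (|s - t| / 2) := by
        rw [mul_inv]; ring
      rw [this]; exact h1
    · calc |f (s / 2) - f (t / 2)| ≤ L * (|s - t| / 2) := h2
        _ ≤ 2 * L * |s - t| := by nlinarith [abs_nonneg (s - t)]
  · intro u hu
    obtain ⟨s, hs, hfs⟩ := hsurj u hu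
    exact ⟨2 * s, by linarith, by show f (2 * s / 2) = u; rw [show 2 * s / 2 = s by ring, hfs]⟩

end Aux

/-- For a δ-hyperbolic space `Y` with one boundary point, admitting a bounded parabolic
action by a finitely generated group `P`, constant horospherical distortion and constant
horospherical dilation are equivalent. -/
theorem stmt_16 {Y P : Type*} [MetricSpace Y] [ProperSpace Y] [Group P] [MulAction P Y]
    (δ D : ℝ) (hδ : 0 ≤ δ) (hD : 0 ≤ D)
    (hgeo : GeodesicSpace Y) (hhyp : GromovThin Y δ)
    (hiso : ∀ (p : P) (a b : Y), dist (p • a) (p • b) = dist a b)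
    (T : Set P) (hTfin : T.Finite) (hTgen : Subgroup.closure T = ⊤)
    (c : ℝ → Y) (hc : IsGeodesicRay c) (y₀ : Y) (hc0 : c 0 = y₀)
    -- every geodesic ray tends to the unique boundary point:
    (hone : ∀ c₁ c₂ : ℝ → Y, IsGeodesicRay c₁ → IsGeodesicRay c₂ → AsympRays c₁ c₂)
    -- the action is bounded parabolic:
    (hbp : ∃ K : ℝ, ∀ y : Y, ∃ (p : P) (t : ℝ), 0 ≤ t ∧ dist y (p • c t) ≤ K)
    -- `D` is the asynchronous-to-synchronous fellow-traveling constant: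
    (hDft : ∀ c' : ℝ → Y, IsGeodesicRay c' → ∀ (p : P) (t : ℝ), 0 ≤ t →
      (∃ s, 0 ≤ s ∧ dist (c' t) (p • c' s) ≤ 5 * δ) → dist (c' t) (p • c' t) ≤ D) :
    ConstHoroDistortion T y₀ ↔ ConstHoroDilation T c D := by
  classical
  have hDftc : ∀ (p : P) (t : ℝ), 0 ≤ t →
      (∃ s, 0 ≤ s ∧ dist (c t) (p • c s) ≤ 5 * δ) → dist (c t) (p • c t) ≤ D :=
    fun p t ht hs => hDft c hc p t ht hs
  have hkey : ∀ (p p' : P) (z : Y), dist (p • z) (p' • z) = dist z ((p⁻¹ * p') • z) := by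
    intro p p' z
    have h1 : p • (p⁻¹ * p') • z = p' • z := by rw [← mul_smul, mul_inv_cancel_left]
    rw [← h1, hiso]
  have hray : ∀ a b : ℝ, 0 ≤ a → 0 ≤ b → a ≤ b → dist (c a) (c b) = b - a := by
    intro a b ha hb hab
    rw [hc a (Set.mem_Ici.mpr ha) b (Set.mem_Ici.mpr hb), abs_sub_comm,
      abs_of_nonneg (by linarith)]
  have dy : ∀ a : ℝ, 0 ≤ a → dist y₀ (c a) = a := by
    intro a ha
    rw [← hc0, hray 0 a le_rfl ha ha, sub_zero]
  constructor
  · -- distortion → dilation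
    rintro ⟨g, hg, B, hB, hdist⟩
    obtain ⟨L, gi, hL, hbi, hpos, hgi, hgif, hgmono, hgimono, hgilip, hgbil⟩ := bilip_pack hg
    have hL0 : (0:ℝ) < L := lt_of_lt_of_le one_pos hL
    have hB0 : (0:ℝ) < B := lt_of_lt_of_le one_pos hB
    refine ⟨fun t => gi t / 2, bilip_half_comp hgbil, B * Real.exp (L * D), by positivity,
      ?_, ?_⟩
    · -- condition (a)
      intro p p' t ht hne hd
      simp only [] at hd
      have hgit0 : 0 ≤ gi t := (hgi t ht).1
      have hgit : g (gi t) = t := (hgi t ht).2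
      have hu0 : 0 ≤ gi t / 2 := by linarith
      have hR : dist (p • y₀) (p' • y₀) ≤ gi t + D := by
        have h1 := dist_triangle4 (p • y₀) (p • c (gi t / 2)) (p' • c (gi t / 2)) (p' • y₀)
        have h2 : dist (p • y₀) (p • c (gi t / 2)) = gi t / 2 := by
          rw [hiso, dy _ hu0]
        have h3 : dist (p' • c (gi t / 2)) (p' • y₀) = gi t / 2 := by
          rw [hiso, dist_comm, dy _ hu0]
        rw [h2, h3] at h1
        linarith
      have hR0 : 0 ≤ dist (p • y₀) (p' • y₀) := dist_nonneg
      have h1 : g (dist (p • y₀) (p' • y₀)) ≤ g (gi t + D) :=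
        hgmono (Set.mem_Ici.mpr hR0) (Set.mem_Ici.mpr (by linarith)) hR
      have h2 : g (gi t + D) ≤ g (gi t) + L * D := by
        have h4 := (hbi (gi t + D) (gi t) (by linarith) hgit0).2
        rw [show gi t + D - gi t = D by ring, abs_of_nonneg hD] at h4
        linarith [le_trans (le_abs_self _) h4]
      have h3 : g (dist (p • y₀) (p' • y₀)) ≤ t + L * D := by
        rw [hgit] at h2; linarith
      calc ((wordDist T p p' : ℕ) : ℝ) ≤ B * Real.exp (g (dist (p • y₀) (p' • y₀))) :=
            (hdist p p' hne).2
        _ ≤ B * Real.exp (t + L * D) := by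
            exact mul_le_mul_of_nonneg_left (Real.exp_le_exp.mpr h3) hB0.le
        _ = B * Real.exp (L * D) * Real.exp t := by rw [Real.exp_add]; ring
    · -- condition (b)
      intro A hA
      set C0 := max 0 (Real.log (A * B)) with hC0def
      have hC00 : 0 ≤ C0 := le_max_left _ _
      refine ⟨3 * D + L * C0, ?_⟩
      intro p p' t ht hne hW
      have hRs : dist (p • y₀) (p' • y₀) = dist y₀ ((p⁻¹ * p') • y₀) := hkey p p' y₀
      set q := p⁻¹ * p' with hqdef
      set R := dist y₀ (q • y₀) with hRdef
      have hR0 : 0 ≤ R := dist_nonneg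
      have hlow := (hdist p p' hne).1
      rw [hRs] at hlow
      have h5 : Real.exp (g R) ≤ A * B * Real.exp t := by
        nlinarith [Real.exp_pos (g R), hW, hlow, hB0, inv_pos.mpr hB0,
          mul_le_mul_of_nonneg_left (le_trans hlow hW) hB0.le,
          inv_mul_cancel_left₀ hB0.ne' (Real.exp (g R))]
      have hAB : (0:ℝ) < A * B := mul_pos hA hB0
      have h6 : g R ≤ Real.log (A * B) + t := by
        have h7 : Real.exp (g R) ≤ Real.exp (Real.log (A * B) + t) := by
          rw [Real.exp_add, Real.exp_log hAB]; exact h5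
        exact Real.exp_le_exp.mp h7
      have h7 : g R ≤ t + C0 := by
        have := le_max_right 0 (Real.log (A * B))
        rw [hC0def]; linarith
      have h8 : R ≤ gi t + L * C0 := by
        have hgR0 : 0 ≤ g R := hpos R hR0
        have e1 : gi (g R) = R := hgif R hR0
        have e2 : gi (g R) ≤ gi (t + C0) :=
          hgimono (Set.mem_Ici.mpr hgR0) (Set.mem_Ici.mpr (by linarith)) h7
        have e3 : |gi (t + C0) - gi t| ≤ L * C0 := by
          have e4 := hgilip (t + C0) t (by linarith) ht
          rw [show t + C0 - t = C0 by ring, abs_of_nonneg hC00] at e4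
          exact e4
        have e5 := le_trans (le_abs_self _) e3
        rw [e1] at e2
        linarith
      have hgit0 : 0 ≤ gi t := (hgi t ht).1
      have hu0 : 0 ≤ gi t / 2 := by linarith
      set u := gi t / 2 with hudef
      set v := max u (R / 2 + D) with hvdef
      have hv2 : R / 2 + D ≤ v := le_max_right _ _
      have hvu : u ≤ v := le_max_left _ _
      have hv0 : 0 ≤ v := le_trans hu0 hvu
      have hvsync : dist (c v) (q • c v) ≤ D :=
        sync2 hδ hD hc hc0 hgeo hhyp hiso hone hDftc q v hv2
      have hvb : v ≤ u + (L * C0 / 2 + D) := by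
        rw [hvdef]
        apply max_le
        · have : 0 ≤ L * C0 / 2 + D := by positivity
          linarith
        · rw [hudef]; linarith
      have hcd : dist (c u) (c v) = v - u := hray u v hu0 hv0 hvu
      have hqd : dist (q • c v) (q • c u) = v - u := by
        rw [hiso, dist_comm]; exact hcd
      have h9 : dist (c u) (q • c u) ≤ (v - u) + D + (v - u) := by
        have h10 := dist_triangle4 (c u) (c v) (q • c v) (q • c u)
        rw [hcd, hqd] at h10
        linarith [hvsync]
      show dist (p • c ((fun t => gi t / 2) t)) (p' • c ((fun t => gi t / 2) t)) ≤
        3 * D + L * C0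
      simp only []
      rw [hkey p p' (c (gi t / 2)), ← hqdef, ← hudef]
      rw [dist_comm] at h9 ⊢
      linarith
  · -- dilation → distortion
    rintro ⟨f, hf, A', hA', ha, hb⟩
    obtain ⟨L, fi, hL, hbi, hpos, hfi, hfif, hfmono, hfimono, hfilip, hfibil⟩ := bilip_pack hf
    have hL0 : (0:ℝ) < L := lt_of_lt_of_le one_pos hL
    obtain ⟨D', hD'⟩ := hb 1 one_pos
    set D2 := max 0 D' with hD2def
    have hD20 : 0 ≤ D2 := le_max_left _ _
    set B := max 1 (max (A' * Real.exp (L * D)) (Real.exp (L * (D2 / 2)))) with hBdef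
    have hB1 : (1:ℝ) ≤ B := le_max_left _ _
    have hB0 : (0:ℝ) < B := lt_of_lt_of_le one_pos hB1
    have hBa : A' * Real.exp (L * D) ≤ B :=
      le_trans (le_max_left _ _) (le_max_right _ _)
    have hBb : Real.exp (L * (D2 / 2)) ≤ B :=
      le_trans (le_max_right _ _) (le_max_right _ _)
    refine ⟨fun x => fi (x / 2), bilip_comp_half hfibil, B, hB1, ?_⟩
    intro p p' hne
    have hRs : dist (p • y₀) (p' • y₀) = dist y₀ ((p⁻¹ * p') • y₀) := hkey p p' y₀
    set q := p⁻¹ * p' with hqdef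
    set R := dist y₀ (q • y₀) with hRdef
    have hR0 : 0 ≤ R := dist_nonneg
    have hgoal : (fun x => fi (x / 2)) (dist (p • y₀) (p' • y₀)) = fi (R / 2) := by
      simp only []
      rw [hRs]
    rw [hgoal]
    constructor
    · -- lower distortion bound
      have hW1 : 1 ≤ wordDist T p p' := one_le_wordDist hTgen hne
      have hW1R : (1:ℝ) ≤ (wordDist T p p' : ℝ) := by exact_mod_cast hW1
      have hWpos : (0:ℝ) < (wordDist T p p' : ℝ) := lt_of_lt_of_le one_pos hW1R
      set t := Real.log (wordDist T p p' : ℝ) with htdef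
      have ht0 : 0 ≤ t := Real.log_nonneg hW1R
      have hWe : (wordDist T p p' : ℝ) = Real.exp t := (Real.exp_log hWpos).symm
      have hd := hD' p p' t ht0 hne (by rw [one_mul, ← hWe])
      have hft0 : 0 ≤ f t := hpos t ht0
      rw [hkey p p' (c (f t)), ← hqdef] at hd
      have hdq : dist (c (f t)) (q • c (f t)) ≤ D2 :=
        le_trans hd (le_max_right _ _)
      have hRb : R ≤ 2 * f t + D2 := by
        have h1 := dist_triangle4 y₀ (c (f t)) (q • c (f t)) (q • y₀)
        have h2 : dist (q • c (f t)) (q • y₀) = f t := by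
          rw [hiso, dist_comm, dy _ hft0]
        rw [dy _ hft0, h2, ← hRdef] at h1
        linarith
      have h9 : fi (R / 2) ≤ t + L * (D2 / 2) := by
        have e2 : fi (R / 2) ≤ fi (f t + D2 / 2) :=
          hfimono (Set.mem_Ici.mpr (by linarith)) (Set.mem_Ici.mpr (by linarith))
            (by linarith)
        have e3 : |fi (f t + D2 / 2) - fi (f t)| ≤ L * (D2 / 2) := by
          have e4 := hfilip (f t + D2 / 2) (f t) (by linarith) hft0
          rw [show f t + D2 / 2 - f t = D2 / 2 by ring,
            abs_of_nonneg (by linarith : (0:ℝ) ≤ D2 / 2)] at e4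
          exact e4
        have e5 := le_trans (le_abs_self _) e3
        have e6 : fi (f t) = t := hfif t ht0
        linarith
      have h10 : Real.exp (fi (R / 2)) ≤ B * (wordDist T p p' : ℝ) := by
        calc Real.exp (fi (R / 2)) ≤ Real.exp (t + L * (D2 / 2)) := Real.exp_le_exp.mpr h9
          _ = Real.exp t * Real.exp (L * (D2 / 2)) := Real.exp_add _ _
          _ = (wordDist T p p' : ℝ) * Real.exp (L * (D2 / 2)) := by rw [← hWe]
          _ ≤ (wordDist T p p' : ℝ) * B := by
              exact mul_le_mul_of_nonneg_left hBb (le_of_lt hWpos)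
          _ = B * (wordDist T p p' : ℝ) := mul_comm _ _
      have h11 := mul_le_mul_of_nonneg_left h10 (inv_nonneg.mpr hB0.le)
      rw [inv_mul_cancel_left₀ hB0.ne'] at h11
      exact h11
    · -- upper distortion bound
      have hq0 : 0 ≤ R / 2 + D := by positivity
      set t := fi (R / 2 + D) with htdef
      have ht0 : 0 ≤ t := (hfi _ hq0).1
      have hft : f t = R / 2 + D := (hfi _ hq0).2
      have hsync : dist (c (f t)) (q • c (f t)) ≤ D :=
        sync2 hδ hD hc hc0 hgeo hhyp hiso hone hDftc q (f t) (by rw [hft])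
      have hd : dist (p • c (f t)) (p' • c (f t)) ≤ D := by
        rw [hkey p p' (c (f t)), ← hqdef]; exact hsync
      have hWle := ha p p' t ht0 hne hd
      have h10 : t ≤ fi (R / 2) + L * D := by
        have e3 : |fi (R / 2 + D) - fi (R / 2)| ≤ L * D := by
          have e4 := hfilip (R / 2 + D) (R / 2) hq0 (by linarith)
          rw [show R / 2 + D - R / 2 = D by ring, abs_of_nonneg hD] at e4
          exact e4
        have e5 := le_trans (le_abs_self _) e3
        rw [htdef]
        linarith
      calc ((wordDist T p p' : ℕ) : ℝ) ≤ A' * Real.exp t := hWle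
        _ ≤ A' * Real.exp (fi (R / 2) + L * D) :=
            mul_le_mul_of_nonneg_left (Real.exp_le_exp.mpr h10) hA'.le
        _ = A' * Real.exp (L * D) * Real.exp (fi (R / 2)) := by rw [Real.exp_add]; ring
        _ ≤ B * Real.exp (fi (R / 2)) :=
            mul_le_mul_of_nonneg_right hBa (Real.exp_pos _).le
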